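/- Let E^N_{ℓ,0} = {I_{N,r} : 0 ≤ r ≤ 2^{N−ℓ}−1} be the lowermost level of the subtree T^N_{ℓ,0}. Then the Carleson constant of its image under the postorder rearrangement satisfies ⟦τ_N(E^N_{ℓ,0})⟧ ≥ (N − ℓ)/2 + 1 ≥ (N − ℓ + 1)/2. -/

import Mathlib

open Finset

/-- The set of dyadic intervals in `[0,1]` of length `≥ 2^{-N}`, encoded as
pairs `(ℓ, k)` with `ℓ ≤ N` and `k < 2^ℓ`, representing `I_{ℓ,k} = [k/2^ℓ, (k+1)/2^ℓ)`. -/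
def DN (N : ℕ) : Finset (ℕ × ℕ) :=
  (Finset.range (N + 1) ×ˢ Finset.range (2 ^ N)).filter fun p => p.2 < 2 ^ p.1

/-- `subInt q p` means the dyadic interval encoded by `q` is contained in the one
encoded by `p`. -/
def subInt (q p : ℕ × ℕ) : Prop := p.1 ≤ q.1 ∧ q.2 / 2 ^ (q.1 - p.1) = p.2

instance (q p : ℕ × ℕ) : Decidable (subInt q p) :=
  inferInstanceAs (Decidable (_ ∧ _))

/-- Postorder on dyadic intervals: `q ⪯ p` iff `q ⊆ p`, or they are disjoint with
`q` to the left of `p`. -/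
def postLE (q p : ℕ × ℕ) : Prop :=
  subInt q p ∨ (q.2 + 1) * 2 ^ p.1 ≤ p.2 * 2 ^ q.1

instance (q p : ℕ × ℕ) : Decidable (postLE q p) :=
  inferInstanceAs (Decidable (_ ∨ _))

/-- Lexicographic order: first by level, then by position. -/
def lexLE (q p : ℕ × ℕ) : Prop := q.1 < p.1 ∨ (q.1 = p.1 ∧ q.2 ≤ p.2)

instance (q p : ℕ × ℕ) : Decidable (lexLE q p) :=
  inferInstanceAs (Decidable (_ ∨ _))

/-- Postorder ordinal number (starting at 1) of the interval `p` in `D_N`. -/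
def postOrdinal (N : ℕ) (p : ℕ × ℕ) : ℕ :=
  ((DN N).filter fun q => postLE q p).card

/-- Lexicographic ordinal number (starting at 1) of the interval `p` in `D_N`. -/
def lexOrdinal (N : ℕ) (p : ℕ × ℕ) : ℕ :=
  ((DN N).filter fun q => lexLE q p).card

/-- Length of the dyadic interval encoded by `p`: `2^{-ℓ}`. -/
noncomputable def len (p : ℕ × ℕ) : ℝ := (2 : ℝ)⁻¹ ^ p.1

/-- Carleson constant of a finite collection of (encoded) dyadic intervals;
`sSup ∅ = 0` in `ℝ`, so the empty collection gets `0`. -/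
noncomputable def carleson (C : Finset (ℕ × ℕ)) : ℝ :=
  sSup {v : ℝ | ∃ p ∈ C, v = (∑ q ∈ C.filter (fun q => subInt q p), len q) / len p}

/-- The complete dyadic subtree `T^N_{ℓ,k} = {I ∈ D_N : I ⊆ I_{ℓ,k}}`. -/
def subtreeT (N ℓ k : ℕ) : Finset (ℕ × ℕ) :=
  (DN N).filter fun q => subInt q (ℓ, k)

theorem sum_two_pow' (n : ℕ) : ∑ j ∈ range n, 2 ^ j = 2 ^ n - 1 := by
  induction n with
  | zero => simp
  | succ n ih =>
    rw [sum_range_succ, ih, pow_succ]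
    have : 1 ≤ 2 ^ n := Nat.one_le_two_pow
    omega

theorem card_DN_filter (N : ℕ) (P : ℕ × ℕ → Prop) [DecidablePred P] :
    ((DN N).filter P).card
      = ∑ j ∈ range (N + 1), ((range (2 ^ j)).filter fun k => P (j, k)).card := by
  unfold DN
  rw [filter_filter, card_filter, Finset.sum_product]
  refine sum_congr rfl fun j hj => ?_
  have hj' : j ≤ N := Nat.lt_succ_iff.mp (mem_range.mp hj)
  have hsub : range (2 ^ j) ⊆ range (2 ^ N) :=
    Finset.range_subset_range.mpr (Nat.pow_le_pow_right (by norm_num) hj')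
  rw [card_filter, ← Finset.sum_subset hsub]
  · exact sum_congr rfl fun k hk => by simp [mem_range.mp hk]
  · intro k hk hk2
    simp only [mem_range] at hk2
    simp [hk2]

theorem lexOrdinal_eq (N : ℕ) (p : ℕ × ℕ) (hp : p ∈ DN N) :
    lexOrdinal N p = 2 ^ p.1 + p.2 := by
  have hp' : p.1 < N + 1 ∧ p.2 < 2 ^ p.1 := by
    unfold DN at hp
    simp only [mem_filter, mem_product, mem_range] at hp
    exact ⟨hp.1.1, hp.2⟩
  unfold lexOrdinal
  rw [card_DN_filter]
  have key : ∀ j ∈ range (N + 1),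
      ((range (2 ^ j)).filter fun k => lexLE (j, k) p).card
        = if j < p.1 then 2 ^ j else if j = p.1 then p.2 + 1 else 0 := by
    intro j _
    rw [show ((range (2 ^ j)).filter fun k => lexLE (j, k) p) = (range (2 ^ j)).filter
      (fun k => j < p.1 ∨ (j = p.1 ∧ k ≤ p.2)) by ext k; rw [mem_filter, mem_filter]; rfl]
    rcases lt_trichotomy j p.1 with h | h | h
    · rw [if_pos h, filter_true_of_mem (fun k _ => Or.inl h), card_range]
    · subst h
      rw [if_neg (lt_irrefl _), if_pos rfl]
      have : ((range (2 ^ p.1)).filter fun k =>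
          p.1 < p.1 ∨ (p.1 = p.1 ∧ k ≤ p.2)) = range (p.2 + 1) := by
        ext k
        simp only [mem_filter, mem_range]
        constructor
        · rintro ⟨_, h | ⟨_, h⟩⟩
          · omega
          · omega
        · intro h
          exact ⟨by omega, Or.inr ⟨by trivial, by omega⟩⟩
      rw [this, card_range]
    · rw [if_neg (by omega), if_neg (by omega), filter_false_of_mem, card_empty]
      intro k _
      simp only [not_or, not_and, not_lt, not_le]
      exact ⟨by omega, fun hj => by omega⟩
  rw [sum_congr rfl key]
  have hsub : range (p.1 + 1) ⊆ range (N + 1) := range_subset_range.mpr (by omega)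
  rw [← Finset.sum_subset hsub (fun j _ hj => by
    simp only [mem_range] at hj
    rw [if_neg (by omega), if_neg (by omega)])]
  rw [sum_range_succ, if_neg (lt_irrefl _), if_pos rfl,
    sum_congr rfl (fun j hj => if_pos (mem_range.mp hj)), sum_two_pow']
  have : 1 ≤ 2 ^ p.1 := Nat.one_le_two_pow
  omega

theorem postOrdinal_eq (N r : ℕ) (hr : r < 2 ^ N) :
    postOrdinal N (N, r) = 1 + ∑ i ∈ range (N + 1), r / 2 ^ i := by
  unfold postOrdinal
  rw [card_DN_filter]
  have key : ∀ j ∈ range (N + 1),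
      ((range (2 ^ j)).filter fun k => postLE (j, k) (N, r)).card
        = (if j = N then 1 else 0) + r / 2 ^ (N - j) := by
    intro j hj
    have hj' : j ≤ N := Nat.lt_succ_iff.mp (mem_range.mp hj)
    rcases eq_or_lt_of_le hj' with h | h
    · subst h
      rw [if_pos rfl]
      have : ((range (2 ^ j)).filter fun k => postLE (j, k) (j, r)) = range (r + 1) := by
        ext k
        simp only [mem_filter, mem_range]; simp only [postLE, subInt]
        constructor
        · rintro ⟨hk, ⟨_, h2⟩ | h2⟩
          · simp at h2; omega
          · have := Nat.le_of_mul_le_mul_right h2 (Nat.two_pow_pos j)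
            omega
        · intro hk
          refine ⟨by omega, ?_⟩
          rcases Nat.lt_or_ge k r with h2 | h2
          · exact Or.inr (Nat.mul_le_mul_right _ (by omega))
          · exact Or.inl ⟨le_refl _, by simp; omega⟩
      rw [this, card_range, Nat.sub_self, pow_zero, Nat.div_one]; omega
    · rw [if_neg (by omega)]
      have h2N : (2:ℕ) ^ N = 2 ^ (N - j) * 2 ^ j := by
        rw [← pow_add]; congr 1; omega
      have hdivlt : r / 2 ^ (N - j) < 2 ^ j := by
        rw [Nat.div_lt_iff_lt_mul (Nat.two_pow_pos _), mul_comm, ← h2N]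
        exact hr
      have : ((range (2 ^ j)).filter fun k => postLE (j, k) (N, r))
          = range (r / 2 ^ (N - j)) := by
        ext k
        simp only [mem_filter, mem_range]; simp only [postLE, subInt]
        constructor
        · rintro ⟨hk, ⟨h1, _⟩ | h1⟩
          · omega
          · have : (k + 1) * 2 ^ (N - j) * 2 ^ j ≤ r * 2 ^ j := by
              rw [mul_assoc, ← h2N]; exact h1
            have h3 : (k + 1) * 2 ^ (N - j) ≤ r :=
              Nat.le_of_mul_le_mul_right this (Nat.two_pow_pos _)
            have := (Nat.le_div_iff_mul_le (Nat.two_pow_pos (N - j))).mpr h3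
            omega
        · intro hk
          refine ⟨by omega, Or.inr ?_⟩
          have h3 : (k + 1) * 2 ^ (N - j) ≤ r :=
            (Nat.le_div_iff_mul_le (Nat.two_pow_pos (N - j))).mp (by omega)
          calc (k + 1) * 2 ^ N = (k + 1) * 2 ^ (N - j) * 2 ^ j := by rw [h2N, mul_assoc]
            _ ≤ r * 2 ^ j := Nat.mul_le_mul_right _ h3
      rw [this, card_range]; omega
  rw [sum_congr rfl key, Finset.sum_add_distrib, Finset.sum_ite_eq' (range (N + 1)) N (fun _ => 1)]
  rw [if_pos (self_mem_range_succ N)]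
  congr 1
  have := Finset.sum_range_reflect (fun i => r / 2 ^ i) (N + 1)
  simpa using this

theorem divsum_le (M : ℕ) : ∀ r : ℕ, 1 ≤ r → ∑ i ∈ range (M + 1), r / 2 ^ i ≤ 2 * r - 1 := by
  induction M with
  | zero => intro r hr; simp; omega
  | succ M ih =>
    intro r hr
    rw [Finset.sum_range_succ' (fun i => r / 2 ^ i) (M + 1)]
    have hterm : ∀ i, r / 2 ^ (i + 1) = (r / 2) / 2 ^ i := by
      intro i
      rw [Nat.div_div_eq_div_mul, pow_succ']
    simp only [hterm, pow_zero, Nat.div_one]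
    rcases Nat.lt_or_ge r 2 with h | h
    · have : r = 1 := by omega
      subst this
      simp
    · have := ih (r / 2) (by omega)
      omega

theorem divsum_ge (N t : ℕ) (ht : t ≤ N) :
    2 ^ (t + 1) - 1 ≤ ∑ i ∈ range (N + 1), 2 ^ t / 2 ^ i := by
  have hsub : range (t + 1) ⊆ range (N + 1) := range_subset_range.mpr (by omega)
  have h1 : ∑ i ∈ range (t + 1), 2 ^ t / 2 ^ i = 2 ^ (t + 1) - 1 := by
    have : ∀ i ∈ range (t + 1), 2 ^ t / 2 ^ i = 2 ^ (t - i) := fun i hi =>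
      Nat.pow_div (Nat.lt_succ_iff.mp (mem_range.mp hi)) (by norm_num)
    rw [sum_congr rfl this]
    have := Finset.sum_range_reflect (fun j => (2:ℕ) ^ j) (t + 1)
    simp only [Nat.add_sub_cancel] at this
    rw [show (∑ i ∈ range (t+1), 2 ^ (t - i)) = ∑ j ∈ range (t+1), 2 ^ j from by
      simpa using this, sum_two_pow']
  rw [← h1]
  exact Finset.sum_le_sum_of_subset hsub


/-- `⟦τ_N(E^N_{ℓ,0})⟧ ≥ (N-ℓ)/2 + 1 ≥ (N-ℓ+1)/2`, where `E^N_{ℓ,0}` is the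
lowermost level of the subtree `T^N_{ℓ,0}` and `τ_N` is the postorder rearrangement. -/
theorem tau_lowermost_left (N ℓ : ℕ) (hℓ : ℓ ≤ N) (τ : ℕ × ℕ → ℕ × ℕ)
    (hbij : Set.BijOn τ (DN N) (DN N))
    (hτ : ∀ p ∈ DN N, lexOrdinal N (τ p) = postOrdinal N p) :
    carleson (((Finset.range (2 ^ (N - ℓ))).image fun r => ((N, r) : ℕ × ℕ)).image τ)
        ≥ ((N : ℝ) - ℓ) / 2 + 1 ∧
    ((N : ℝ) - ℓ) / 2 + 1 ≥ ((N : ℝ) - ℓ + 1) / 2 := by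
  
  constructor
  · have hm' : N - ℓ ≤ N := Nat.sub_le _ _
    have hmem : ∀ r, r < 2 ^ N → ((N, r) : ℕ × ℕ) ∈ DN N := by
      intro r hr
      unfold DN
      simp only [mem_filter, mem_product, mem_range]
      exact ⟨⟨Nat.lt_succ_self N, hr⟩, hr⟩
    have htq : ∀ r, r < 2 ^ N → τ (N, r) ∈ DN N := fun r hr => hbij.mapsTo (hmem r hr)
    have hord : ∀ r, r < 2 ^ N →
        2 ^ (τ (N, r)).1 + (τ (N, r)).2 = 1 + ∑ i ∈ range (N + 1), r / 2 ^ i := by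
      intro r hr
      rw [← lexOrdinal_eq N _ (htq r hr), hτ _ (hmem r hr), postOrdinal_eq N r hr]
    have hsnd : ∀ r, r < 2 ^ N → (τ (N, r)).2 < 2 ^ (τ (N, r)).1 := by
      intro r hr
      have h := htq r hr
      unfold DN at h
      simp only [mem_filter, mem_product, mem_range] at h
      exact h.2
    have h2Npos : (0:ℕ) < 2 ^ N := Nat.two_pow_pos _
    have htau0 : τ (N, 0) = (0, 0) := by
      have h1 := hord 0 h2Npos
      simp only [Nat.zero_div, Finset.sum_const_zero] at h1
      have h2 := hsnd 0 h2Npos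
      have ha : (τ (N, 0)).1 = 0 := by
        by_contra h
        have : 2 ≤ 2 ^ (τ (N, 0)).1 := by
          calc 2 = 2 ^ 1 := rfl
          _ ≤ _ := Nat.pow_le_pow_right (by norm_num) (by omega)
        omega
      have hb : (τ (N, 0)).2 = 0 := by rw [ha] at h1; simpa using h1
      exact Prod.ext ha hb
    have hlevel : ∀ i r, 1 ≤ i → i ≤ N → 2 ^ (i - 1) ≤ r → r < 2 ^ i →
        (τ (N, r)).1 = i := by
      intro i r hi1 hiN hlo hhi
      have hrN : r < 2 ^ N := lt_of_lt_of_le hhi (Nat.pow_le_pow_right (by norm_num) hiN)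
      have h1 := hord r hrN
      have h2 := hsnd r hrN
      have hFlo : 2 ^ i ≤ 1 + ∑ j ∈ range (N + 1), r / 2 ^ j := by
        have hmono : ∑ j ∈ range (N + 1), 2 ^ (i - 1) / 2 ^ j
            ≤ ∑ j ∈ range (N + 1), r / 2 ^ j :=
          Finset.sum_le_sum fun j _ => Nat.div_le_div_right hlo
        have hge := divsum_ge N (i - 1) (by omega)
        have hi' : i - 1 + 1 = i := by omega
        rw [hi'] at hge
        have h2i : 1 ≤ 2 ^ i := Nat.one_le_two_pow
        omega
      have hFhi : 1 + ∑ j ∈ range (N + 1), r / 2 ^ j < 2 ^ (i + 1) := by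
        have hrpos : 1 ≤ r := le_trans Nat.one_le_two_pow hlo
        have hd := divsum_le N r hrpos
        have hp : (2:ℕ) ^ (i + 1) = 2 * 2 ^ i := by rw [pow_succ]; ring
        omega
      have hahi : 1 + ∑ j ∈ range (N + 1), r / 2 ^ j < 2 ^ ((τ (N, r)).1 + 1) := by
        have hp : (2:ℕ) ^ ((τ (N, r)).1 + 1) = 2 * 2 ^ (τ (N, r)).1 := by rw [pow_succ]; ring
        omega
      have l1 : (τ (N, r)).1 < i + 1 :=
        (Nat.pow_lt_pow_iff_right (by norm_num)).mp (lt_of_le_of_lt (by omega) hFhi)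
      have l2 : i < (τ (N, r)).1 + 1 :=
        (Nat.pow_lt_pow_iff_right (by norm_num)).mp (lt_of_le_of_lt hFlo hahi)
      omega
    have hsum : ∀ m', m' ≤ N - ℓ →
        ∑ r ∈ range (2 ^ m'), ((2:ℝ)⁻¹) ^ (τ (N, r)).1 = 1 + (m' : ℝ) / 2 := by
      intro m'
      induction m' with
      | zero => intro _; simp [htau0]
      | succ k ih =>
        intro hk1
        have hk : k ≤ N - ℓ := by omega
        rw [range_eq_Ico, ← Finset.sum_Ico_consecutive _ (Nat.zero_le (2 ^ k))
          (Nat.pow_le_pow_right (by norm_num) (by omega)), ← range_eq_Ico, ih hk]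
        have hconst : ∀ r ∈ Finset.Ico (2 ^ k) (2 ^ (k + 1)),
            ((2:ℝ)⁻¹) ^ (τ (N, r)).1 = ((2:ℝ)⁻¹) ^ (k + 1) := by
          intro r hr
          simp only [Finset.mem_Ico] at hr
          rw [hlevel (k + 1) r (by omega) (by omega) (by simpa using hr.1) hr.2]
        rw [Finset.sum_congr rfl hconst, Finset.sum_const, Nat.card_Ico]
        have hcard : 2 ^ (k + 1) - 2 ^ k = 2 ^ k := by rw [pow_succ]; omega
        rw [hcard]
        have hval : (2 ^ k : ℕ) • ((2:ℝ)⁻¹) ^ (k + 1) = 1 / 2 := by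
          rw [nsmul_eq_mul, Nat.cast_pow, pow_succ, ← mul_assoc, ← mul_pow]
          norm_num
        rw [hval]
        push_cast
        ring
    have h00 : ((0, 0) : ℕ × ℕ) ∈
        ((Finset.range (2 ^ (N - ℓ))).image fun r => ((N, r) : ℕ × ℕ)).image τ := by
      refine Finset.mem_image.mpr ⟨(N, 0), ?_, htau0⟩
      exact Finset.mem_image.mpr
        ⟨0, Finset.mem_range.mpr (Nat.two_pow_pos _), rfl⟩
    set C := ((Finset.range (2 ^ (N - ℓ))).image fun r => ((N, r) : ℕ × ℕ)).image τ with hC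
    have hfilt : C.filter (fun q => subInt q ((0:ℕ), (0:ℕ))) = C := by
      apply filter_true_of_mem
      intro q hq
      rw [hC] at hq
      obtain ⟨p, hp, rfl⟩ := Finset.mem_image.mp hq
      obtain ⟨r, hr, rfl⟩ := Finset.mem_image.mp hp
      have hr' : r < 2 ^ N :=
        lt_of_lt_of_le (mem_range.mp hr) (Nat.pow_le_pow_right (by norm_num) hm')
      exact ⟨Nat.zero_le _, by rw [Nat.sub_zero]; exact Nat.div_eq_of_lt (hsnd r hr')⟩
    have hsumC : ∑ q ∈ C, len q = 1 + ((N - ℓ : ℕ) : ℝ) / 2 := by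
      rw [hC]
      rw [Finset.sum_image, Finset.sum_image]
      · exact hsum (N - ℓ) le_rfl
      · intro x hx y hy hxy
        simp only [mem_range, coe_range, Set.mem_Iio] at hx hy
        have := (Prod.mk.injEq N x N y).mp hxy
        omega
      · intro x hx y hy hxy
        obtain ⟨r, hr, rfl⟩ := Finset.mem_image.mp hx
        obtain ⟨s, hs, rfl⟩ := Finset.mem_image.mp hy
        have hr' : r < 2 ^ N :=
          lt_of_lt_of_le (mem_range.mp hr) (Nat.pow_le_pow_right (by norm_num) hm')
        have hs' : s < 2 ^ N :=
          lt_of_lt_of_le (mem_range.mp hs) (Nat.pow_le_pow_right (by norm_num) hm')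
        exact hbij.injOn (hmem r hr') (hmem s hs') hxy
    have hvmem : (1 + ((N - ℓ : ℕ) : ℝ) / 2) ∈
        {v : ℝ | ∃ p ∈ C, v = (∑ q ∈ C.filter (fun q => subInt q p), len q) / len p} := by
      refine ⟨(0, 0), h00, ?_⟩
      rw [hfilt, hsumC]
      simp [len]
    have hbdd : BddAbove
        {v : ℝ | ∃ p ∈ C, v = (∑ q ∈ C.filter (fun q => subInt q p), len q) / len p} := by
      have heq : {v : ℝ | ∃ p ∈ C, v = (∑ q ∈ C.filter (fun q => subInt q p), len q) / len p}
          = (fun p => (∑ q ∈ C.filter (fun q => subInt q p), len q) / len p) '' ↑C := by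
        ext v
        simp only [Set.mem_setOf_eq, Set.mem_image, Finset.mem_coe]
        constructor
        · rintro ⟨p, hp, rfl⟩; exact ⟨p, hp, rfl⟩
        · rintro ⟨p, hp, rfl⟩; exact ⟨p, hp, rfl⟩
      rw [heq]
      exact (C.finite_toSet.image _).bddAbove
    have hcast : ((N - ℓ : ℕ) : ℝ) = (N : ℝ) - ℓ := by
      push_cast [hℓ]
      ring
    have hfinal : carleson C ≥ 1 + ((N - ℓ : ℕ) : ℝ) / 2 := le_csSup hbdd hvmem
    rw [hcast] at hfinal
    calc ((N : ℝ) - ℓ) / 2 + 1 = 1 + ((N : ℝ) - ℓ) / 2 := by ring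
    _ ≤ carleson C := hfinal
  · linarith
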